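/- For an algebraic Kähler curvature tensor R acting on r-forms, one has Σ_a i(e_a)(R_−(Je_a)φ) = 0 and Σ_a θ^a ∧ (R_+(Je_a)φ) = 0 for every r-form φ. -/

import Mathlib

open scoped RealInnerProductSpace
open Finset

noncomputable section

/-- `n`-forms on `V`: alternating `n`-linear maps `V^n → ℝ`. -/
abbrev Form (V : Type*) [AddCommGroup V] [Module ℝ V] (n : ℕ) :=
  AlternatingMap ℝ V ℝ (Fin n)

variable {V : Type*} [NormedAddCommGroup V] [InnerProductSpace ℝ V]

/-- The metric dual covector `X♭`, as a 1-form: `X♭(Y) = ⟪X, Y⟫`. -/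
def flat (X : V) : Form V 1 :=
  AlternatingMap.ofSubsingleton ℝ V ℝ 0 ((innerSL ℝ X).toLinearMap)

/-- Interior product `i(X)` on forms of positive degree. -/
def iprodS {n : ℕ} (X : V) (φ : Form V (n + 1)) : Form V n :=
  φ.curryLeft X

/-- Wedge product of a 1-form with an `n`-form. -/
def eps {n : ℕ} (ω : Form V 1) (φ : Form V n) : Form V (n + 1) :=
  AlternatingMap.domDomCongr (finSumFinEquiv.trans (finCongr (Nat.add_comm 1 n)))
    ((TensorProduct.lid ℝ ℝ).toLinearMap.compAlternatingMap (ω.domCoprod φ))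

/-- The Ricci endomorphism `ρ(X) = ∑ₐ R(X, eₐ) eₐ`. -/
def ric {q : ℕ} (R : V →ₗ[ℝ] V →ₗ[ℝ] (V →ₗ[ℝ] V))
    (e : OrthonormalBasis (Fin q) ℝ V) (X : V) : V :=
  ∑ a, R X (e a) (e a)

/-- `R₊(X) φ = ∑ₐ θᵃ ∧ (R(X, eₐ) φ)`. -/
def Rp {q : ℕ} (act : ∀ n : ℕ, (V →ₗ[ℝ] V) → Form V n → Form V n)
    (R : V →ₗ[ℝ] V →ₗ[ℝ] (V →ₗ[ℝ] V)) (e : OrthonormalBasis (Fin q) ℝ V)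
    {n : ℕ} (X : V) (φ : Form V n) : Form V (n + 1) :=
  ∑ a, eps (flat (e a)) (act n (R X (e a)) φ)

/-- `R₋(X) φ = ∑ₐ i(eₐ) (R(X, eₐ) φ)`. -/
def Rm {q : ℕ} (act : ∀ n : ℕ, (V →ₗ[ℝ] V) → Form V n → Form V n)
    (R : V →ₗ[ℝ] V →ₗ[ℝ] (V →ₗ[ℝ] V)) (e : OrthonormalBasis (Fin q) ℝ V)
    {n : ℕ} (X : V) (φ : Form V (n + 1)) : Form V n :=
  ∑ a, iprodS (e a) (act (n + 1) (R X (e a)) φ)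

/-- The curvature endomorphism `F(φ) = ∑_{a,b} θᵃ ∧ i(e_b) (R(e_b, eₐ) φ)`. -/
def Fop {q : ℕ} (act : ∀ n : ℕ, (V →ₗ[ℝ] V) → Form V n → Form V n)
    (R : V →ₗ[ℝ] V →ₗ[ℝ] (V →ₗ[ℝ] V)) (e : OrthonormalBasis (Fin q) ℝ V)
    {n : ℕ} (φ : Form V (n + 1)) : Form V (n + 1) :=
  ∑ a, ∑ b, eps (flat (e a)) (iprodS (e b) (act (n + 1) (R (e b) (e a)) φ))


open TensorProduct in
set_option synthInstance.maxHeartbeats 1000000 in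
set_option maxHeartbeats 1000000 in
private lemma eps_apply {n : ℕ} (ω : Form V 1) (φ : Form V n) (v : Fin (n + 1) → V) :
    eps ω φ v
      = ∑ i : Fin (n + 1), (-1 : ℝ) ^ (i : ℕ) * (ω ![v i] * φ (fun j => v (i.succAbove j))) := by
  classical
  set E : Fin 1 ⊕ Fin n ≃ Fin (n + 1) := finSumFinEquiv.trans (finCongr (Nat.add_comm 1 n)) with hEdef
  have hEl : E (Sum.inl 0) = 0 := by apply Fin.ext; simp [hEdef]
  have hEr : ∀ j : Fin n, E (Sum.inr j) = j.succ := by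
    intro j; apply Fin.ext; simp [hEdef, Nat.add_comm]
  have hfne : (n.factorial : ℝ) ≠ 0 := Nat.cast_ne_zero.mpr n.factorial_ne_zero
  refine mul_left_cancel₀ hfne ?_
  have h0 : eps ω φ v = TensorProduct.lid ℝ ℝ ((ω.domCoprod φ) (fun i => v (E i))) := rfl
  have h2 := congrArg
    (fun (A : AlternatingMap ℝ V (ℝ ⊗[ℝ] ℝ) (Fin 1 ⊕ Fin n)) =>
      (TensorProduct.lid ℝ ℝ) (A (fun i => v (E i))))
    (MultilinearMap.domCoprod_alternization_eq ω φ)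
  simp only [AlternatingMap.smul_apply, Fintype.card_fin, Nat.factorial_one, one_mul] at h2
  rw [← Nat.cast_smul_eq_nsmul ℝ, map_smul, smul_eq_mul] at h2
  rw [h0, ← h2]
  rw [show ((MultilinearMap.alternatization
      (MultilinearMap.domCoprod ω φ : MultilinearMap ℝ (fun _ : Fin 1 ⊕ Fin n => V) (ℝ ⊗[ℝ] ℝ)))
      (fun i => v (E i)))
    = ∑ σ : Equiv.Perm (Fin 1 ⊕ Fin n), Equiv.Perm.sign σ •
        (MultilinearMap.domCoprod ω φ : MultilinearMap ℝ (fun _ : Fin 1 ⊕ Fin n => V) (ℝ ⊗[ℝ] ℝ))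
          (fun i => v (E (σ i))) from MultilinearMap.alternatization_apply _ _]
  rw [map_sum]
  have hterm : ∀ σ : Equiv.Perm (Fin 1 ⊕ Fin n),
      (TensorProduct.lid ℝ ℝ) (Equiv.Perm.sign σ •
        (MultilinearMap.domCoprod ω φ : MultilinearMap ℝ (fun _ : Fin 1 ⊕ Fin n => V) (ℝ ⊗[ℝ] ℝ))
          (fun i => v (E (σ i))))
      = ((Equiv.Perm.sign σ : ℤ) : ℝ) *
          (ω (fun i => v (E (σ (Sum.inl i)))) * φ (fun j => v (E (σ (Sum.inr j))))) := by
    intro σ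
    have hdc : ((MultilinearMap.domCoprod ω φ : MultilinearMap ℝ (fun _ : Fin 1 ⊕ Fin n => V) (ℝ ⊗[ℝ] ℝ))
        (fun i => v (E (σ i))))
        = (ω (fun i => v (E (σ (Sum.inl i))))) ⊗ₜ[ℝ] (φ (fun j => v (E (σ (Sum.inr j))))) := rfl
    rw [hdc, Units.smul_def, TensorProduct.smul_tmul', TensorProduct.lid_tmul]
    simp only [smul_eq_mul, zsmul_eq_mul, Int.cast_mul]
    ring
  simp only [hterm]
  rw [Fintype.sum_equiv E.permCongr
    (fun σ => ((Equiv.Perm.sign σ : ℤ) : ℝ) *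
      (ω (fun i => v (E (σ (Sum.inl i)))) * φ (fun j => v (E (σ (Sum.inr j))))))
    (fun π => ((Equiv.Perm.sign π : ℤ) : ℝ) *
      (ω ![v (π 0)] * φ (fun j => v (π j.succ))))
    ?_]
  · rw [← Fintype.sum_equiv Equiv.Perm.decomposeFin.symm
      (fun x : Fin (n+1) × Equiv.Perm (Fin n) =>
        ((Equiv.Perm.sign (Equiv.Perm.decomposeFin.symm x) : ℤ) : ℝ) *
          (ω ![v (Equiv.Perm.decomposeFin.symm x 0)] *
            φ (fun j => v (Equiv.Perm.decomposeFin.symm x j.succ))))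
      (fun π => ((Equiv.Perm.sign π : ℤ) : ℝ) * (ω ![v (π 0)] * φ (fun j => v (π j.succ))))
      (fun x => rfl)]
    rw [Fintype.sum_prod_type]
    have hin : ∀ (p : Fin (n+1)) (τ : Equiv.Perm (Fin n)),
        ((Equiv.Perm.sign (Equiv.Perm.decomposeFin.symm (p, τ)) : ℤ) : ℝ) *
          (ω ![v p] * φ (fun j => v (Equiv.swap 0 p (τ j).succ)))
        = (if p = 0 then (1:ℝ) else -1) *
            (ω ![v p] * φ (fun j => v (Equiv.swap 0 p j.succ))) := by
      intro p τ
      have hφ : φ (fun j => v (Equiv.swap 0 p (τ j).succ))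
          = ((Equiv.Perm.sign τ : ℤ) : ℝ) • φ (fun j => v (Equiv.swap 0 p j.succ)) := by
        have h3 := φ.map_perm (fun j => v (Equiv.swap 0 p j.succ)) τ
        simpa [Units.smul_def, Function.comp_def] using h3
      rw [hφ, Equiv.Perm.decomposeFin.symm_sign]
      rcases Int.units_eq_one_or (Equiv.Perm.sign τ) with h | h <;>
        by_cases hp : p = 0 <;>
        simp [h, hp, smul_eq_mul] <;> ring
    simp only [Equiv.Perm.decomposeFin_symm_apply_zero, Equiv.Perm.decomposeFin_symm_apply_succ]
    simp only [hin]
    rw [Finset.sum_congr rfl (fun p _ => Finset.sum_const _)]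
    simp only [Finset.card_univ, Fintype.card_perm, Finset.mul_sum]
    have hkey : ∀ p : Fin (n+1), (if p = 0 then (1:ℝ) else -1) *
        φ (fun j => v (Equiv.swap 0 p j.succ)) = (-1:ℝ)^(p:ℕ) * φ (fun j => v (p.succAbove j)) := by
      intro p
      induction p using Fin.cases with
      | zero => simp [Equiv.swap_self, Fin.zero_succAbove]
      | succ q =>
          have hc : (fun j => v (Equiv.swap 0 q.succ j.succ))
              = (fun j => v (q.succ.succAbove j)) ∘ q.cycleRange := by
            funext j
            simp [Function.comp, Fin.succAbove_cycleRange]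
          have hmp := φ.map_perm (fun j => v (q.succ.succAbove j)) q.cycleRange
          rw [hc, hmp, Fin.sign_cycleRange]
          simp only [Fin.succ_ne_zero, if_false, Units.smul_def, Units.val_pow_eq_pow_val,
            Units.val_neg, Units.val_one, zsmul_eq_mul, Int.cast_pow, Int.cast_neg, Int.cast_one,
            Fin.val_succ, pow_succ]
          ring
    refine Finset.sum_congr rfl fun p _ => ?_
    rw [nsmul_eq_mul, Fintype.card_fin]
    linear_combination ((n.factorial : ℝ) * ω ![v p]) * hkey p
  · intro σ
    have h0' : E.permCongr σ 0 = E (σ (Sum.inl 0)) := by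
      simp [Equiv.permCongr_apply, ← hEl]
    have hs' : ∀ j : Fin n, E.permCongr σ j.succ = E (σ (Sum.inr j)) := by
      intro j; simp [Equiv.permCongr_apply, ← hEr j]
    have e1 : (fun i : Fin 1 => v (E (σ (Sum.inl i)))) = ![v (E.permCongr σ 0)] := by
      funext i
      have hi : i = 0 := Subsingleton.elim _ _
      subst hi
      simp [h0']
    have e2 : (fun j => v (E (σ (Sum.inr j)))) = fun j => v (E.permCongr σ j.succ) := by
      funext j; rw [hs' j]
    rw [e1, e2, Equiv.Perm.sign_permCongr]

private lemma iprodS_apply {n : ℕ} (X : V) (φ : Form V (n + 1)) (v : Fin n → V) :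
    iprodS X φ v = φ (Fin.cons X v) := rfl

private lemma iprodS_add {n : ℕ} (X : V) (φ ψ : Form V (n + 1)) :
    iprodS X (φ + ψ) = iprodS X φ + iprodS X ψ := by
  ext v; simp [iprodS_apply]

private lemma iprodS_sum {n : ℕ} {ι : Type*} (s : Finset ι) (X : V) (f : ι → Form V (n + 1)) :
    iprodS X (∑ i ∈ s, f i) = ∑ i ∈ s, iprodS X (f i) := by
  classical
  induction s using Finset.induction with
  | empty => ext v; simp [iprodS_apply]
  | insert _ _ h ih => rw [Finset.sum_insert h, Finset.sum_insert h, iprodS_add, ih]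

private lemma eps_add {n : ℕ} (ω : Form V 1) (φ ψ : Form V n) :
    eps ω (φ + ψ) = eps ω φ + eps ω ψ := by
  ext v
  simp only [eps_apply, AlternatingMap.add_apply]
  rw [← Finset.sum_add_distrib]
  exact Finset.sum_congr rfl fun i _ => by ring

private lemma eps_smul {n : ℕ} (ω : Form V 1) (c : ℝ) (φ : Form V n) :
    eps ω (c • φ) = c • eps ω φ := by
  ext v
  simp only [eps_apply, AlternatingMap.smul_apply, smul_eq_mul, Finset.mul_sum]
  exact Finset.sum_congr rfl fun i _ => by ring

private lemma eps_neg {n : ℕ} (ω : Form V 1) (φ : Form V n) : eps ω (-φ) = - eps ω φ := by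
  ext v
  simp only [eps_apply, AlternatingMap.neg_apply, ← Finset.sum_neg_distrib]
  exact Finset.sum_congr rfl fun i _ => by ring

private lemma eps_sub {n : ℕ} (ω : Form V 1) (φ ψ : Form V n) :
    eps ω (φ - ψ) = eps ω φ - eps ω ψ := by
  rw [sub_eq_add_neg, eps_add, eps_neg, sub_eq_add_neg]

private lemma eps_sum {n : ℕ} {ι : Type*} (s : Finset ι) (ω : Form V 1) (f : ι → Form V n) :
    eps ω (∑ i ∈ s, f i) = ∑ i ∈ s, eps ω (f i) := by
  classical
  induction s using Finset.induction with
  | empty =>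
      ext v
      simp [eps_apply]
  | insert _ _ h ih => rw [Finset.sum_insert h, Finset.sum_insert h, eps_add, ih]

private lemma iprod_eps_zero (ω : Form V 1) (φ : Form V 0) (X : V) :
    iprodS X (eps ω φ) = ω ![X] • φ := by
  ext v
  rw [iprodS_apply, eps_apply, Fin.sum_univ_one]
  have hv : (fun j : Fin 0 => (Fin.cons X v : Fin 1 → V) ((0 : Fin 1).succAbove j)) = v := by
    funext j; exact j.elim0
  have hc : (![(Fin.cons X v : Fin 1 → V) 0] : Fin 1 → V) = ![X] := by
    funext i
    have : i = 0 := Subsingleton.elim _ _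
    subst this; simp
  rw [hv, hc]
  simp

private lemma iprod_eps {n : ℕ} (ω : Form V 1) (φ : Form V (n + 1)) (X : V) :
    iprodS X (eps ω φ) = ω ![X] • φ - eps ω (iprodS X φ) := by
  ext v
  rw [AlternatingMap.sub_apply, AlternatingMap.smul_apply, iprodS_apply, eps_apply,
    Fin.sum_univ_succ]
  have h0 : (fun j : Fin (n+1) => (Fin.cons X v : Fin (n+2) → V) ((0 : Fin (n+2)).succAbove j)) = v := by
    funext j; simp [Fin.zero_succAbove]
  have hsucc : ∀ k : Fin (n+1),
      (fun j : Fin (n+1) => (Fin.cons X v : Fin (n+2) → V) (k.succ.succAbove j))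
        = (Fin.cons X (fun j' : Fin n => v (k.succAbove j')) : Fin (n+1) → V) := by
    intro k
    funext j
    induction j using Fin.cases with
    | zero => simp [Fin.succ_succAbove_zero]
    | succ j' => simp [Fin.succ_succAbove_succ]
  have hc0 : (![(Fin.cons X v : Fin (n+2) → V) (0 : Fin (n+2))] : Fin 1 → V) = ![X] := by
    funext i
    have : i = 0 := Subsingleton.elim _ _
    subst this; simp
  rw [h0, hc0]
  simp only [pow_zero, one_mul, smul_eq_mul]
  rw [eps_apply]
  have hterm : ∀ k : Fin (n+1),
      (-1:ℝ) ^ ((k.succ : Fin (n+2)) : ℕ) *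
        (ω ![(Fin.cons X v : Fin (n+2) → V) k.succ] * φ (fun j => (Fin.cons X v : Fin (n+2) → V) (k.succ.succAbove j)))
      = -((-1:ℝ) ^ (k:ℕ) * (ω ![v k] * (iprodS X φ) (fun j => v (k.succAbove j)))) := by
    intro k
    rw [hsucc k]
    have hck : (![(Fin.cons X v : Fin (n+2) → V) k.succ] : Fin 1 → V) = ![v k] := by
      funext i
      have : i = 0 := Subsingleton.elim _ _
      subst this; simp
    rw [hck, iprodS_apply, Fin.val_succ, pow_succ]
    ring
  rw [Finset.sum_congr rfl fun k _ => hterm k, Finset.sum_neg_distrib]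
  rw [Fin.val_zero, pow_zero]
  ring

private lemma eq_zero_of_iprod {m : ℕ} (F : Form V (m + 1)) (h : ∀ X, iprodS X F = 0) : F = 0 := by
  ext v
  have h2 := congrArg (fun G : Form V m => G (Fin.tail v)) (h (v 0))
  simpa [iprodS_apply, Fin.cons_self_tail] using h2

private lemma iprod_iprod {n : ℕ} (X Y : V) (φ : Form V (n + 2)) :
    iprodS X (iprodS Y φ) = - iprodS Y (iprodS X φ) := by
  ext v
  rw [iprodS_apply, iprodS_apply, AlternatingMap.neg_apply, iprodS_apply, iprodS_apply]
  have hsw : ((Fin.cons X (Fin.cons Y v) : Fin (n+2) → V) ∘ Equiv.swap 0 1)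
      = (Fin.cons Y (Fin.cons X v) : Fin (n+2) → V) := by
    funext k
    induction k using Fin.cases with
    | zero => simp [Equiv.swap_apply_left]
    | succ k' =>
      induction k' using Fin.cases with
      | zero =>
        simp [Function.comp, Fin.succ_zero_eq_one, Equiv.swap_apply_right]
      | succ k'' =>
        have h1 : (k''.succ.succ : Fin (n+2)) ≠ 0 := Fin.succ_ne_zero _
        have h2 : (k''.succ.succ : Fin (n+2)) ≠ 1 := Fin.succ_succ_ne_one _
        simp [Function.comp, Equiv.swap_apply_of_ne_of_ne h1 h2]
  have h := φ.map_swap (Fin.cons X (Fin.cons Y v)) (show (0 : Fin (n + 2)) ≠ 1 from Fin.zero_ne_one)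
  rw [← hsw]
  exact h

private lemma eps_eps {n : ℕ} (ω ω' : Form V 1) (φ : Form V n) :
    eps ω (eps ω' φ) + eps ω' (eps ω φ) = 0 := by
  induction n with
  | zero =>
    apply eq_zero_of_iprod
    intro X
    simp only [iprodS_add, iprod_eps, iprod_eps_zero, eps_smul]
    abel
  | succ m ih =>
    apply eq_zero_of_iprod
    intro X
    simp only [iprodS_add, iprod_eps, eps_sub, eps_smul]
    have h := ih (iprodS X φ)
    trans (eps ω (eps ω' (iprodS X φ)) + eps ω' (eps ω (iprodS X φ)))
    · abel
    · exact h

/-- For an algebraic Kähler curvature tensor `R` acting on `r`-forms,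
`∑ₐ i(eₐ)(R₋(J eₐ)φ) = 0` and `∑ₐ θᵃ ∧ (R₊(J eₐ)φ) = 0` for every `r`-form `φ`. -/
theorem sum_interior_Rm_J_and_sum_wedge_Rp_J_eq_zero
    {m : ℕ} (hm : 1 ≤ m)
    (J : V →ₗ[ℝ] V) (hJO : ∀ x y : V, ⟪J x, J y⟫ = ⟪x, y⟫)
    (hJ2 : ∀ x : V, J (J x) = -x)
    (e : OrthonormalBasis (Fin (2 * m)) ℝ V)
    (R : V →ₗ[ℝ] V →ₗ[ℝ] (V →ₗ[ℝ] V))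
    (hRskew : ∀ X Y : V, R X Y = -R Y X)
    (hRskewadj : ∀ X Y u v : V, ⟪R X Y u, v⟫ = -⟪u, R X Y v⟫)
    (hRbianchi : ∀ X Y Z : V, R X Y Z + R Y Z X + R Z X Y = 0)
    (hRJ : ∀ X Y v : V, R X Y (J v) = J (R X Y v))
    (hRJJ : ∀ X Y : V, R (J X) (J Y) = R X Y)
    (act : ∀ n : ℕ, (V →ₗ[ℝ] V) → Form V n → Form V n)
    (hact : ∀ (n : ℕ) (A : V →ₗ[ℝ] V) (φ : Form V n) (v : Fin n → V),
      act n A φ v = -∑ k, φ (Function.update v k (A (v k)))) :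
    (∀ (r : ℕ) (φ : Form V (r + 2)),
        ∑ a, iprodS (e a) (Rm act R e (J (e a)) φ) = 0) ∧
    (∀ (r : ℕ) (φ : Form V r),
        ∑ a, eps (flat (e a)) (Rp act R e (J (e a)) φ) = 0)  := by
  classical
  have hsymm : ∀ a b : Fin (2 * m), R (J (e a)) (e b) = R (J (e b)) (e a) := by
    intro a b
    calc R (J (e a)) (e b) = - R (e b) (J (e a)) := hRskew _ _
      _ = R (-(e b)) (J (e a)) := by rw [map_neg, LinearMap.neg_apply]
      _ = R (J (J (e b))) (J (e a)) := by rw [hJ2]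
      _ = R (J (e b)) (e a) := hRJJ _ _
  constructor
  · intro r φ
    set T : Fin (2 * m) → Fin (2 * m) → Form V r := fun a b =>
      iprodS (e a) (iprodS (e b) (act (r + 2) (R (J (e a)) (e b)) φ)) with hT
    have hstep : ∑ a, iprodS (e a) (Rm act R e (J (e a)) φ) = ∑ a, ∑ b, T a b := by
      refine Finset.sum_congr rfl fun a _ => ?_
      rw [show Rm act R e (J (e a)) φ
          = ∑ b, iprodS (e b) (act (r + 2) (R (J (e a)) (e b)) φ) from rfl, iprodS_sum]
    rw [hstep]
    have hanti : ∀ a b, T b a = - T a b := by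
      intro a b
      rw [hT]
      dsimp only
      rw [hsymm b a, iprod_iprod]
    have hS : (∑ a, ∑ b, T a b) = - ∑ a, ∑ b, T a b := by
      conv_lhs => rw [Finset.sum_comm]
      calc ∑ b, ∑ a, T a b = ∑ b, ∑ a, - T b a := by
            refine Finset.sum_congr rfl fun b _ => Finset.sum_congr rfl fun a _ => ?_
            rw [hanti b a]
        _ = - ∑ b, ∑ a, T b a := by simp only [Finset.sum_neg_distrib]
        _ = - ∑ a, ∑ b, T a b := by rw [Finset.sum_comm]
    have h2 : (2 : ℝ) • (∑ a, ∑ b, T a b) = 0 := by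
      rw [two_smul]
      nth_rewrite 2 [hS]
      exact add_neg_cancel _
    calc (∑ a, ∑ b, T a b) = (2⁻¹ : ℝ) • ((2 : ℝ) • ∑ a, ∑ b, T a b) := by
          rw [smul_smul]; norm_num
      _ = 0 := by rw [h2, smul_zero]
  · intro r φ
    set T : Fin (2 * m) → Fin (2 * m) → Form V (r + 1 + 1) := fun a b =>
      eps (flat (e a)) (eps (flat (e b)) (act r (R (J (e a)) (e b)) φ)) with hT
    have hstep : ∑ a, eps (flat (e a)) (Rp act R e (J (e a)) φ) = ∑ a, ∑ b, T a b := by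
      refine Finset.sum_congr rfl fun a _ => ?_
      rw [show Rp act R e (J (e a)) φ
          = ∑ b, eps (flat (e b)) (act r (R (J (e a)) (e b)) φ) from rfl, eps_sum]
    rw [hstep]
    have hanti : ∀ a b, T a b + T b a = 0 := by
      intro a b
      rw [hT]
      dsimp only
      rw [hsymm b a]
      exact eps_eps (flat (e a)) (flat (e b)) (act r (R (J (e a)) (e b)) φ)
    have h2 : (2 : ℝ) • (∑ a, ∑ b, T a b) = 0 := by
      rw [two_smul]
      nth_rewrite 2 [Finset.sum_comm]
      rw [← Finset.sum_add_distrib]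
      refine Finset.sum_eq_zero fun a _ => ?_
      rw [← Finset.sum_add_distrib]
      exact Finset.sum_eq_zero fun b _ => hanti a b
    calc (∑ a, ∑ b, T a b) = (2⁻¹ : ℝ) • ((2 : ℝ) • ∑ a, ∑ b, T a b) := by
          rw [smul_smul]; norm_num
      _ = 0 := by rw [h2, smul_zero]

end
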